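/- Let S be a finite set with s = |S| ≥ 2 elements. Define w : Π*(S) → ℝ by w(π) = (−1)^{s−|π|} (|π| − 1)!, where |π| is the number of blocks. Then for every proper subset T ⊊ S with |T| ≥ 2 and every nontrivial partition τ of T, the sum of w(π) over all π ∈ Π*(S) with π|_T = τ equals 0. -/

import Mathlib

open Submodule Finset

variable {V : Type*} [Fintype V] [DecidableEq V]

/-- The set of nontrivial partitions `Π*(α)` of `α`, encoded as setoids different from `⊤`
(the one-block partition). -/
def NontrivPart (α : Type*) := {P : Setoid α // P ≠ ⊤}

/-- Restriction `P|_S` of a partition of `V` to a subset `S`: the partition of `S` whose blocks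
are the nonempty intersections of blocks of `P` with `S`. -/
def restrictS (S : Set V) (P : Setoid V) : Setoid ↥S := Setoid.comap Subtype.val P

open Classical in
/-- The indicator function `1_{S,π} : Π*(V) → ℝ`, equal to `1` at `P` iff `P|_S = π`. -/
noncomputable def ind (S : Set V) (π : Setoid ↥S) : NontrivPart V → ℝ :=
  fun P => if restrictS S P.1 = π then 1 else 0

/-- The subspace `U_S ⊆ ℝ^{Π*(V)}` spanned by the indicators `1_{S,π}` over nontrivial
partitions `π` of `S` (equal to `{0}` when `|S| ≤ 1`, since then no nontrivial `π` exists). -/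
noncomputable def U (S : Set V) : Submodule ℝ (NontrivPart V → ℝ) :=
  Submodule.span ℝ {f | ∃ π : Setoid ↥S, π ≠ ⊤ ∧ f = ind S π}

/-- Bell number `B n`: the number of partitions (setoids) of an `n`-element set. -/
noncomputable def bell (n : ℕ) : ℕ := Nat.card (Setoid (Fin n))

/-- Stirling number of the second kind `S(u,j)`: the number of partitions of a `u`-element set
into exactly `j` blocks. -/
noncomputable def stirling (u j : ℕ) : ℕ :=
  Nat.card {σ : Setoid (Fin u) // Nat.card (Quotient σ) = j}


instance setoidFiniteAux {α : Type*} [Finite α] : Finite (Setoid α) :=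
  Finite.of_injective (fun s : Setoid α => s.r)
    (fun _ _ h => Setoid.ext fun x y => iff_of_eq (congrFun (congrFun h x) y))

open Classical in
noncomputable def extendFun {X : Type*} (x : X) (ρ : Setoid X) (Q : Setoid {z : X // ¬ ρ x z})
    (o : Option (Quotient Q)) (z : X) : Option (Quotient Q) :=
  if hz : ρ x z then o else some (Quotient.mk Q ⟨z, hz⟩)

open Classical in
lemma fiber_sum {X : Type*} [Fintype X] [Fintype (Setoid X)] (x : X) (ρ : Setoid X)
    (Q : Setoid {z : X // ¬ ρ x z}) (hQ : Setoid.comap Subtype.val ρ ≤ Q) (f : ℕ → ℝ) :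
    (∑ P : Setoid X, if ρ ≤ P ∧ Setoid.comap Subtype.val P = Q
        then f (Nat.card (Quotient P)) else 0)
      = f (Nat.card (Quotient Q) + 1)
        + (Nat.card (Quotient Q) : ℝ) * f (Nat.card (Quotient Q)) := by
  classical
  haveI : Fintype (Quotient Q) := Fintype.ofFinite _
  set Φ : Option (Quotient Q) → Setoid X := fun o => Setoid.ker (extendFun x ρ Q o) with hΦdef
  have hΦ_le : ∀ o, ρ ≤ Φ o := by
    intro o a b hab
    show extendFun x ρ Q o a = extendFun x ρ Q o b
    by_cases hxa : ρ x a
    · have hxb : ρ x b := ρ.trans' hxa hab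
      rw [extendFun, extendFun, dif_pos hxa, dif_pos hxb]
    · have hxb : ¬ ρ x b := fun h => hxa (ρ.trans' h (ρ.symm' hab))
      rw [extendFun, extendFun, dif_neg hxa, dif_neg hxb]
      exact congrArg some (Quotient.sound (hQ hab))
  have hΦ_comap : ∀ o, Setoid.comap Subtype.val (Φ o) = Q := by
    intro o
    ext a b
    show extendFun x ρ Q o a.val = extendFun x ρ Q o b.val ↔ Q a b
    rw [extendFun, extendFun, dif_neg a.2, dif_neg b.2, Option.some_inj]
    exact Quotient.eq
  have key_rel : ∀ (o : Option (Quotient Q)) (cl : Quotient Q),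
      (Φ o) x (cl.out : {z : X // ¬ ρ x z}).val ↔ o = some cl := by
    intro o cl
    show extendFun x ρ Q o x = extendFun x ρ Q o (cl.out).val ↔ o = some cl
    rw [extendFun, extendFun, dif_pos (ρ.refl' x), dif_neg (cl.out).2]
    have : Quotient.mk Q ⟨(cl.out).val, (cl.out).2⟩ = cl := by
      rw [Subtype.eta]; exact Quotient.out_eq cl
    rw [this]
  have hΦ_inj : Function.Injective Φ := by
    intro o1 o2 h
    have hiff : ∀ cl, o1 = some cl ↔ o2 = some cl := fun cl => by
      rw [← key_rel o1 cl, ← key_rel o2 cl, h]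
    match o1, o2 with
    | none, none => rfl
    | none, some cl => exact absurd ((hiff cl).2 rfl) (by simp)
    | some cl, none => exact absurd ((hiff cl).1 rfl) (by simp)
    | some cl1, some cl2 => exact (hiff cl1).1 rfl |>.symm
  have hΦ_surj : ∀ P : Setoid X, ρ ≤ P → Setoid.comap Subtype.val P = Q → ∃ o, Φ o = P := by
    intro P hle hcom
    have Qrel : ∀ u v : {z : X // ¬ ρ x z}, Q u v ↔ P u.val v.val := by
      intro u v; rw [← hcom]; rfl
    by_cases hex : ∃ z : {z : X // ¬ ρ x z}, P x z.val
    · obtain ⟨z0, hz0⟩ := hex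
      refine ⟨some (Quotient.mk Q z0), ?_⟩
      ext a b
      show extendFun x ρ Q _ a = extendFun x ρ Q _ b ↔ P a b
      by_cases hxa : ρ x a <;> by_cases hxb : ρ x b
      · rw [extendFun, extendFun, dif_pos hxa, dif_pos hxb]
        exact iff_of_true rfl (P.trans' (P.symm' (hle hxa)) (hle hxb))
      · rw [extendFun, extendFun, dif_pos hxa, dif_neg hxb, Option.some_inj]
        rw [Quotient.eq, Qrel]
        constructor
        · intro h; exact P.trans' (P.trans' (P.symm' (hle hxa)) hz0) h
        · intro h; exact P.trans' (P.trans' (P.symm' hz0) (hle hxa)) h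
      · rw [extendFun, extendFun, dif_neg hxa, dif_pos hxb, Option.some_inj,
          Quotient.eq, Qrel]
        constructor
        · intro h; exact P.trans' h (P.trans' (P.symm' hz0) (hle hxb))
        · intro h; exact P.trans' h (P.trans' (P.symm' (hle hxb)) hz0)
      · rw [extendFun, extendFun, dif_neg hxa, dif_neg hxb, Option.some_inj, Quotient.eq, Qrel]
    · refine ⟨none, ?_⟩
      ext a b
      show extendFun x ρ Q _ a = extendFun x ρ Q _ b ↔ P a b
      by_cases hxa : ρ x a <;> by_cases hxb : ρ x b
      · rw [extendFun, extendFun, dif_pos hxa, dif_pos hxb]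
        exact iff_of_true rfl (P.trans' (P.symm' (hle hxa)) (hle hxb))
      · rw [extendFun, extendFun, dif_pos hxa, dif_neg hxb]
        refine iff_of_false (by simp) fun h => hex ⟨⟨b, hxb⟩, P.trans' (hle hxa) h⟩
      · rw [extendFun, extendFun, dif_neg hxa, dif_pos hxb]
        refine iff_of_false (by simp) fun h => hex ⟨⟨a, hxa⟩, P.trans' (hle hxb) (P.symm' h)⟩
      · rw [extendFun, extendFun, dif_neg hxa, dif_neg hxb, Option.some_inj, Quotient.eq, Qrel]
  have hrange : ∀ o, Set.range (extendFun x ρ Q o)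
      = insert o (Set.range (some : Quotient Q → Option (Quotient Q))) := by
    intro o
    ext w
    constructor
    · rintro ⟨z, rfl⟩
      by_cases hz : ρ x z
      · rw [extendFun, dif_pos hz]; exact Set.mem_insert _ _
      · rw [extendFun, dif_neg hz]
        exact Set.mem_insert_of_mem _ ⟨_, rfl⟩
    · intro hw
      rcases Set.mem_insert_iff.1 hw with rfl | ⟨cl, rfl⟩
      · refine ⟨x, ?_⟩; rw [extendFun, dif_pos (ρ.refl' x)]
      · refine ⟨(cl.out : {z : X // ¬ ρ x z}).val, ?_⟩
        rw [extendFun, dif_neg (cl.out).2]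
        congr 1
        rw [Subtype.eta]; exact Quotient.out_eq cl
  have hcard_none : Nat.card (Quotient (Φ none)) = Nat.card (Quotient Q) + 1 := by
    rw [Nat.card_congr (Setoid.quotientKerEquivRange (extendFun x ρ Q none)), hrange none,
      Nat.card_coe_set_eq, Set.ncard_insert_of_notMem (by simp) (Set.toFinite _),
      ← Nat.card_coe_set_eq, Nat.card_range_of_injective (Option.some_injective _)]
  have hcard_some : ∀ cl, Nat.card (Quotient (Φ (some cl))) = Nat.card (Quotient Q) := by
    intro cl
    rw [Nat.card_congr (Setoid.quotientKerEquivRange (extendFun x ρ Q (some cl))), hrange (some cl),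
      Set.insert_eq_self.2 (Set.mem_range_self cl), Nat.card_range_of_injective (Option.some_injective _)]
  have bij : (∑ P : Setoid X, if ρ ≤ P ∧ Setoid.comap Subtype.val P = Q
        then f (Nat.card (Quotient P)) else 0)
      = ∑ o : Option (Quotient Q), f (Nat.card (Quotient (Φ o))) := by
    rw [← Finset.sum_filter]
    refine (Finset.sum_bij (fun o (_ : o ∈ Finset.univ) => Φ o) ?_ ?_ ?_ ?_).symm
    · intro o _
      simp only [Finset.mem_filter, Finset.mem_univ, true_and]
      exact ⟨hΦ_le o, hΦ_comap o⟩
    · intro o1 _ o2 _ h; exact hΦ_inj h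
    · intro P hP
      simp only [Finset.mem_filter, Finset.mem_univ, true_and] at hP
      obtain ⟨o, ho⟩ := hΦ_surj P hP.1 hP.2
      exact ⟨o, Finset.mem_univ o, ho⟩
    · intro o _; rfl
  rw [bij, Fintype.sum_option]
  simp only [hcard_none, hcard_some]
  rw [Finset.sum_const, Finset.card_univ, nsmul_eq_mul, Nat.card_eq_fintype_card]

open Classical in
lemma key_sum {X : Type*} [Fintype X] [Fintype (Setoid X)] (ρ : Setoid X) (hρ : ρ ≠ ⊤)
    (f : ℕ → ℝ) (hf : ∀ c : ℕ, 1 ≤ c → f (c + 1) + (c : ℝ) * f c = 0) :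
    (∑ P : Setoid X, if ρ ≤ P then f (Nat.card (Quotient P)) else 0) = 0 := by
  classical
  obtain ⟨x, y, hxy⟩ : ∃ x y, ¬ ρ x y := by
    by_contra h; push_neg at h; exact hρ (Setoid.eq_top_iff.2 h)
  haveI : Fintype (Setoid {z : X // ¬ ρ x z}) := Fintype.ofFinite _
  have step1 : ∀ P : Setoid X, (if ρ ≤ P then f (Nat.card (Quotient P)) else 0)
      = ∑ Q : Setoid {z : X // ¬ ρ x z},
          (if ρ ≤ P ∧ Setoid.comap Subtype.val P = Q then f (Nat.card (Quotient P)) else 0) := by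
    intro P
    rw [Finset.sum_eq_single (Setoid.comap Subtype.val P)]
    · by_cases h : ρ ≤ P
      · rw [if_pos h, if_pos ⟨h, rfl⟩]
      · rw [if_neg h, if_neg (fun hc => h hc.1)]
    · intro b _ hb; exact if_neg (fun hc => hb hc.2.symm)
    · intro h; exact absurd (Finset.mem_univ _) h
  calc (∑ P : Setoid X, if ρ ≤ P then f (Nat.card (Quotient P)) else 0)
      = ∑ P : Setoid X, ∑ Q : Setoid {z : X // ¬ ρ x z},
          (if ρ ≤ P ∧ Setoid.comap Subtype.val P = Q then f (Nat.card (Quotient P)) else 0) :=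
        Finset.sum_congr rfl (fun P _ => step1 P)
    _ = ∑ Q : Setoid {z : X // ¬ ρ x z}, ∑ P : Setoid X,
          (if ρ ≤ P ∧ Setoid.comap Subtype.val P = Q then f (Nat.card (Quotient P)) else 0) :=
        Finset.sum_comm
    _ = 0 := ?_
  refine Finset.sum_eq_zero fun Q _ => ?_
  by_cases hQ : Setoid.comap Subtype.val ρ ≤ Q
  · rw [fiber_sum x ρ Q hQ f]
    haveI : Nonempty (Quotient Q) := ⟨Quotient.mk Q ⟨y, hxy⟩⟩
    exact hf _ Nat.card_pos
  · refine Finset.sum_eq_zero fun P _ => ?_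
    refine if_neg ?_
    rintro ⟨h1, h2⟩
    exact hQ (h2 ▸ (fun u v huv => h1 huv))

def extSetoid {V : Type*} (T : Set V) (sig : Setoid ↥T) : Setoid V where
  r a b := a = b ∨ ∃ (ha : a ∈ T) (hb : b ∈ T), sig ⟨a, ha⟩ ⟨b, hb⟩
  iseqv := by
    refine ⟨fun a => Or.inl rfl, ?_, ?_⟩
    · rintro a b (rfl | ⟨ha, hb, h⟩)
      · exact Or.inl rfl
      · exact Or.inr ⟨hb, ha, sig.symm' h⟩
    · rintro a b c (rfl | ⟨ha, hb, h1⟩) h2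
      · exact h2
      · rcases h2 with rfl | ⟨hb', hc, h2⟩
        · exact Or.inr ⟨ha, hb, h1⟩
        · exact Or.inr ⟨ha, hc, sig.trans' h1 h2⟩

instance : Finite (Setoid V) :=
  Finite.of_injective (fun s : Setoid V => s.r)
    (fun _ _ h => Setoid.ext fun x y => iff_of_eq (congrFun (congrFun h x) y))

open Classical in
/-- with `w(π) = (−1)^{s−|π|} (|π|−1)!` on `Π*(S)` (here the ambient finite set is
`V`, `s = |V|`, and `|π| = ` number of blocks `= |Quotient π|`), for every proper subset
`T ⊊ V` with `|T| ≥ 2` and every nontrivial partition `τ` of `T`, the sum of `w(π)` over all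
`π ∈ Π*(V)` with `π|_T = τ` vanishes. -/
theorem stmt8 (h2 : 2 ≤ Fintype.card V) (T : Set V) (hT : T ≠ Set.univ)
    (hT2 : 2 ≤ Nat.card ↥T) (τ : Setoid ↥T) (hτ : τ ≠ ⊤) :
    ∑ᶠ P : NontrivPart V,
      (if restrictS T P.1 = τ then
        (-1 : ℝ) ^ (Fintype.card V - Nat.card (Quotient P.1)) *
          (Nat.factorial (Nat.card (Quotient P.1) - 1) : ℝ)
      else 0) = 0 := by
  classical
  haveI : Finite (NontrivPart V) :=
    Finite.of_injective (fun P : NontrivPart V => P.1) (fun a b h => Subtype.ext h)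
  haveI : Fintype (NontrivPart V) := Fintype.ofFinite _
  haveI : Fintype (Setoid V) := Fintype.ofFinite _
  haveI : Fintype (Setoid ↥T) := Fintype.ofFinite _
  haveI hVne : Nonempty V := Fintype.card_pos_iff.1 (by omega)
  set f : ℕ → ℝ := fun k => (-1 : ℝ) ^ (k - 1) * (Nat.factorial (k - 1) : ℝ) with hfdef
  have hf : ∀ c : ℕ, 1 ≤ c → f (c + 1) + (c : ℝ) * f c = 0 := by
    intro c hc
    obtain ⟨d, rfl⟩ := Nat.exists_eq_add_of_le hc
    simp only [hfdef]
    have e1 : 1 + d + 1 - 1 = d + 1 := by omega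
    have e2 : 1 + d - 1 = d := by omega
    rw [e1, e2, pow_succ, Nat.factorial_succ]
    push_cast
    ring
  have hrestr : ∀ (sig : Setoid ↥T) (P : Setoid V),
      (sig ≤ restrictS T P ↔ extSetoid T sig ≤ P) := by
    intro sig P
    constructor
    · rintro h a b (rfl | ⟨ha, hb, hab⟩)
      · exact P.refl' a
      · exact h hab
    · intro h u v huv
      exact h (Or.inr ⟨u.2, v.2, huv⟩)
  obtain ⟨v0, hv0⟩ := (Set.ne_univ_iff_exists_notMem _).1 hT
  have hTne : Nonempty ↥T := by
    by_contra h
    rw [not_nonempty_iff] at h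
    rw [Nat.card_of_isEmpty] at hT2
    omega
  obtain ⟨t0⟩ := hTne
  have hext_ne : ∀ sig : Setoid ↥T, extSetoid T sig ≠ ⊤ := by
    intro sig hc
    have h1 : extSetoid T sig v0 t0.val := Setoid.eq_top_iff.1 hc v0 t0.val
    rcases h1 with rfl | ⟨ha, _, _⟩
    · exact hv0 t0.2
    · exact hv0 ha
  have g_zero : ∀ sig : Setoid ↥T,
      (∑ P : Setoid V, if sig ≤ restrictS T P then f (Nat.card (Quotient P)) else 0) = 0 := by
    intro sig
    have heq : ∀ P : Setoid V, (if sig ≤ restrictS T P then f (Nat.card (Quotient P)) else 0)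
        = (if extSetoid T sig ≤ P then f (Nat.card (Quotient P)) else 0) := fun P =>
      if_congr (hrestr sig P) rfl rfl
    rw [Finset.sum_congr rfl fun P _ => heq P]
    exact key_sum (extSetoid T sig) (hext_ne sig) f hf
  have F_zero : ∀ sig : Setoid ↥T,
      (∑ P : Setoid V, if restrictS T P = sig then f (Nat.card (Quotient P)) else 0) = 0 := by
    intro sig
    refine IsWellFounded.induction (fun (a b : Setoid ↥T) => a > b)
      (motive := fun sg => (∑ P : Setoid V,
        if restrictS T P = sg then f (Nat.card (Quotient P)) else 0) = 0) sig ?_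
    intro sig IH
    have expand : (∑ P : Setoid V, if sig ≤ restrictS T P then f (Nat.card (Quotient P)) else 0)
        = ∑ sig' : Setoid ↥T, (if sig ≤ sig' then
            (∑ P : Setoid V, if restrictS T P = sig' then f (Nat.card (Quotient P)) else 0)
          else 0) := by
      have hswap : ∀ P : Setoid V, (if sig ≤ restrictS T P then f (Nat.card (Quotient P)) else 0)
          = ∑ sig' : Setoid ↥T, (if sig ≤ sig' then
              (if restrictS T P = sig' then f (Nat.card (Quotient P)) else 0) else 0) := by
        intro P
        symm
        rw [Finset.sum_eq_single (restrictS T P)]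
        · simp
        · intro b _ hb; simp [Ne.symm hb]
        · intro h; exact absurd (Finset.mem_univ _) h
      calc (∑ P : Setoid V, if sig ≤ restrictS T P then f (Nat.card (Quotient P)) else 0)
          = ∑ P : Setoid V, ∑ sig' : Setoid ↥T, (if sig ≤ sig' then
              (if restrictS T P = sig' then f (Nat.card (Quotient P)) else 0) else 0) :=
            Finset.sum_congr rfl fun P _ => hswap P
        _ = ∑ sig' : Setoid ↥T, ∑ P : Setoid V, (if sig ≤ sig' then
              (if restrictS T P = sig' then f (Nat.card (Quotient P)) else 0) else 0) :=
            Finset.sum_comm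
        _ = _ := Finset.sum_congr rfl fun sig' _ => by
            by_cases h : sig ≤ sig' <;> simp [h]
    have h0 := g_zero sig
    rw [expand, ← Finset.add_sum_erase _ _ (Finset.mem_univ sig), if_pos le_rfl] at h0
    have hrest : (∑ sig' ∈ Finset.univ.erase sig, (if sig ≤ sig' then
        (∑ P : Setoid V, if restrictS T P = sig' then f (Nat.card (Quotient P)) else 0)
        else 0)) = 0 := by
      refine Finset.sum_eq_zero fun sig' hs => ?_
      by_cases h : sig ≤ sig'
      · rw [if_pos h]
        exact IH sig' (lt_of_le_of_ne h (Ne.symm (Finset.mem_erase.1 hs).1))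
      · rw [if_neg h]
    rw [hrest, add_zero] at h0
    exact h0
  rw [finsum_eq_sum_of_fintype]
  have htop : restrictS T (⊤ : Setoid V) = ⊤ := by
    ext a b
    simp [restrictS, Setoid.comap_rel, Setoid.top_def]
    exact trivial
  have hsub : (∑ P : NontrivPart V,
        (if restrictS T P.1 = τ then f (Nat.card (Quotient P.1)) else 0))
      = ∑ P : Setoid V, (if restrictS T P = τ then f (Nat.card (Quotient P)) else 0) := by
    rw [← Finset.sum_erase_add Finset.univ _ (Finset.mem_univ (⊤ : Setoid V)),
      if_neg (by rw [htop]; exact Ne.symm hτ), add_zero]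
    refine Finset.sum_bij (fun (P : NontrivPart V) (_ : P ∈ Finset.univ) => P.1) ?_ ?_ ?_ ?_
    · intro P _; exact Finset.mem_erase.2 ⟨P.2, Finset.mem_univ _⟩
    · intro a _ b _ h; exact Subtype.ext h
    · intro P hP; exact ⟨⟨P, (Finset.mem_erase.1 hP).1⟩, Finset.mem_univ _, rfl⟩
    · intro P _; rfl
  have hwP : ∀ P : NontrivPart V,
      (if restrictS T P.1 = τ then
        (-1 : ℝ) ^ (Fintype.card V - Nat.card (Quotient P.1)) *
          (Nat.factorial (Nat.card (Quotient P.1) - 1) : ℝ)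
      else 0)
      = (-1 : ℝ) ^ (Fintype.card V - 1) *
          (if restrictS T P.1 = τ then f (Nat.card (Quotient P.1)) else 0) := by
    intro P
    by_cases h : restrictS T P.1 = τ
    · rw [if_pos h, if_pos h]
      have c1 : 1 ≤ Nat.card (Quotient P.1) := by
        haveI : Nonempty (Quotient P.1) := ⟨Quotient.mk P.1 (Classical.arbitrary V)⟩
        exact Nat.card_pos
      have c2 : Nat.card (Quotient P.1) ≤ Fintype.card V := by
        rw [← Nat.card_eq_fintype_card]
        exact Nat.card_le_card_of_surjective (Quotient.mk P.1) (fun q => ⟨q.out, Quotient.out_eq q⟩)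
      simp only [hfdef]
      rw [← mul_assoc, ← pow_add]
      congr 1
      have e3 : Fintype.card V - 1 + (Nat.card (Quotient P.1) - 1)
          = (Fintype.card V - Nat.card (Quotient P.1)) + 2 * (Nat.card (Quotient P.1) - 1) := by
        omega
      rw [e3, pow_add, pow_mul, neg_one_sq, one_pow, mul_one]
    · rw [if_neg h, if_neg h, mul_zero]
  calc (∑ P : NontrivPart V,
        (if restrictS T P.1 = τ then
          (-1 : ℝ) ^ (Fintype.card V - Nat.card (Quotient P.1)) *
            (Nat.factorial (Nat.card (Quotient P.1) - 1) : ℝ)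
        else 0))
      = ∑ P : NontrivPart V, (-1 : ℝ) ^ (Fintype.card V - 1) *
          (if restrictS T P.1 = τ then f (Nat.card (Quotient P.1)) else 0) :=
        Finset.sum_congr rfl fun P _ => hwP P
    _ = (-1 : ℝ) ^ (Fintype.card V - 1) * ∑ P : NontrivPart V,
          (if restrictS T P.1 = τ then f (Nat.card (Quotient P.1)) else 0) :=
        (Finset.mul_sum _ _ _).symm
    _ = 0 := by rw [hsub, F_zero τ, mul_zero]
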